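/- Let N(t) be a centered Gaussian process on [0,1] with increments satisfying E[(N(t) - N(s))²] ≤ C√(t-s)·(|log(t-s)| + 1)·exp(-Δ²/(2)) for all 0 ≤ s < t ≤ 1 and a constant C, Δ ≥ 1. Then there exist constants c, C' > 0 (independent of Δ, r) such that for all r > 0, P(sup_{t ≤ 1} |N(t)| > r) ≤ c·exp(-C'·r²·exp(Δ²/2)). -/

import Mathlib

open MeasureTheory ProbabilityTheory Real
open scoped ENNReal NNReal

lemma sqrt_two_pow (m : ℕ) : Real.sqrt (2^m) = (Real.sqrt 2)^m := by
  induction m with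
  | zero => simp
  | succ k ih => rw [pow_succ, pow_succ, Real.sqrt_mul (by positivity), ih]

lemma geom_growth {q : ℝ} (hq1 : 1 < q) (hL1 : Real.log q < 1) :
    ∀ m : ℕ, (((m:ℝ)+1)*(Real.log q)/2)^2 ≤ q^m := by
  intro m
  set L := Real.log q with hL
  have hq0 : (0:ℝ) < q := lt_trans one_pos hq1
  have hL0 : 0 < L := Real.log_pos hq1
  set p := Real.sqrt q with hp
  have hppos : 0 < p := Real.sqrt_pos.2 hq0
  have hlogp : Real.log p = L/2 := by rw [hp, Real.log_sqrt hq0.le]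
  have hpm : p^m = Real.exp ((m:ℝ) * (L/2)) := by
    rw [Real.exp_nat_mul, ← hlogp, Real.exp_log hppos]
  have hlin : ((m:ℝ)+1)*(L/2) ≤ p^m := by
    rw [hpm]
    have h1 : (m:ℝ)*(L/2) + 1 ≤ Real.exp ((m:ℝ)*(L/2)) := Real.add_one_le_exp _
    have h2 : ((m:ℝ)+1)*(L/2) ≤ (m:ℝ)*(L/2) + 1 := by nlinarith
    linarith
  have hnn : 0 ≤ ((m:ℝ)+1)*(L/2) := by positivity
  have hsq : (((m:ℝ)+1)*(L/2))^2 ≤ (p^m)^2 := by nlinarith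
  calc (((m:ℝ)+1)*L/2)^2 = (((m:ℝ)+1)*(L/2))^2 := by ring
    _ ≤ (p^m)^2 := hsq
    _ = (p^2)^m := by rw [← pow_mul, ← pow_mul, Nat.mul_comm]
    _ = q^m := by rw [hp, Real.sq_sqrt hq0.le]

lemma gauss_tail (v : ℝ≥0) (σ2 a : ℝ) (hσ : 0 < σ2) (hv : (v : ℝ) ≤ σ2) (ha : 0 < a) :
    gaussianReal 0 v {y : ℝ | a < |y|} ≤ ENNReal.ofReal (2 * Real.exp (-(a^2) / (4*σ2))) := by
  have hsmeas : MeasurableSet {y : ℝ | a < |y|} :=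
    measurableSet_lt measurable_const (continuous_abs.measurable)
  by_cases hv0 : v = 0
  · subst hv0
    rw [gaussianReal_zero_var, Measure.dirac_apply' _ hsmeas]
    simp only [Set.indicator_apply, Set.mem_setOf_eq, abs_zero]
    rw [if_neg (by simpa using ha.not_gt)]
    positivity
  · have hvpos : (0:ℝ) < (v:ℝ) := by positivity
    set g : ℝ → ℝ := fun x => (Real.sqrt (2*π*v))⁻¹ * Real.exp (-(a^2)/(4*v)) * Real.exp (-(1/(4*v)) * x^2) with hg
    have hgmeas : Measurable fun x => ENNReal.ofReal (g x) :=
      (((measurable_const.mul measurable_const).mul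
        ((measurable_id.pow_const 2).const_mul _).exp)).ennreal_ofReal
    have hgint : Integrable g := by
      apply Integrable.const_mul
      exact integrable_exp_neg_mul_sq (by positivity)
    have hpt : ∀ x ∈ {y : ℝ | a < |y|}, gaussianPDF 0 v x ≤ ENNReal.ofReal (g x) := by
      intro x hx
      rw [gaussianPDF_def]
      apply ENNReal.ofReal_le_ofReal
      have hax : a^2 ≤ x^2 := by
        calc a^2 = |a|^2 := by rw [abs_of_pos ha]
        _ ≤ |x|^2 := by apply pow_le_pow_left₀ (abs_nonneg a); rw [abs_of_pos ha]; exact le_of_lt hx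
        _ = x^2 := sq_abs x
      have key : rexp (-(x-0)^2/(2*(v:ℝ))) ≤ rexp (-(a^2)/(4*v)) * rexp (-(1/(4*v))*x^2) := by
        rw [← Real.exp_add]
        apply Real.exp_le_exp.2
        rw [show -(a^2)/(4*(v:ℝ)) + (-(1/(4*v))*x^2) = -((a^2+x^2)/(4*v)) by ring,
          show -(x-0)^2/(2*(v:ℝ)) = -((2*x^2)/(4*v)) by ring]
        apply neg_le_neg
        rw [div_le_div_iff₀ (by positivity) (by positivity)]
        nlinarith [sq_nonneg x]
      calc gaussianPDFReal 0 v x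
          = (Real.sqrt (2*π*(v:ℝ)))⁻¹ * rexp (-(x-0)^2/(2*v)) := by
            rw [gaussianPDFReal_def]
        _ ≤ (Real.sqrt (2*π*(v:ℝ)))⁻¹ * (rexp (-(a^2)/(4*v)) * rexp (-(1/(4*v))*x^2)) :=
            mul_le_mul_of_nonneg_left key (by positivity)
        _ = g x := by rw [hg]; ring
    have hsqrt2 : Real.sqrt 2 ≤ 2 := by
      nlinarith [Real.sq_sqrt (by norm_num : (0:ℝ) ≤ 2), Real.sqrt_nonneg 2]
    calc gaussianReal 0 v {y : ℝ | a < |y|}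
        = ∫⁻ x in {y : ℝ | a < |y|}, gaussianPDF 0 v x := gaussianReal_apply 0 hv0 _
      _ ≤ ∫⁻ x in {y : ℝ | a < |y|}, ENNReal.ofReal (g x) := setLIntegral_mono hgmeas hpt
      _ ≤ ∫⁻ x, ENNReal.ofReal (g x) := setLIntegral_le_lintegral _ _
      _ = ENNReal.ofReal (∫ x, g x) := (ofReal_integral_eq_lintegral_ofReal hgint
          (Filter.Eventually.of_forall fun x => by positivity)).symm
      _ ≤ ENNReal.ofReal (2 * Real.exp (-(a^2) / (4*σ2))) := by
          apply ENNReal.ofReal_le_ofReal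
          have hint : ∫ x, g x = (Real.sqrt (2*π*v))⁻¹ * Real.exp (-(a^2)/(4*v)) * Real.sqrt (π / (1/(4*v))) := by
            rw [hg, integral_const_mul, integral_gaussian]
          have h2 : π / (1/(4*(v:ℝ))) = 2 * (2*π*v) := by field_simp; ring
          have hA : Real.sqrt (2*π*(v:ℝ)) ≠ 0 := by positivity
          rw [hint, h2, Real.sqrt_mul (by norm_num : (0:ℝ) ≤ 2)]
          rw [show (Real.sqrt (2*π*(v:ℝ)))⁻¹ * Real.exp (-(a^2)/(4*v)) * (Real.sqrt 2 * Real.sqrt (2*π*v))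
              = Real.sqrt 2 * Real.exp (-(a^2)/(4*v)) * ((Real.sqrt (2*π*(v:ℝ)))⁻¹ * Real.sqrt (2*π*v)) by ring,
            inv_mul_cancel₀ hA, mul_one]
          apply mul_le_mul hsqrt2 _ (by positivity) (by norm_num)
          apply Real.exp_le_exp.2
          rw [neg_div, neg_div, neg_le_neg_iff]
          gcongr

lemma dyadic_approx {t : ℝ} (ht0 : 0 ≤ t) (ht1 : t ≤ 1) {δ : ℝ} (hδ : 0 < δ) :
    ∃ n k : ℕ, k < 2^n ∧ |(k:ℝ)/2^n - t| < δ := by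
  obtain ⟨n, hn⟩ : ∃ n : ℕ, (1/2:ℝ)^n < δ := exists_pow_lt_of_lt_one hδ (by norm_num)
  have h2n : (0:ℝ) < 2^n := by positivity
  have h2npos : 0 < 2^n := Nat.pow_pos (by norm_num)
  have hhalf : (1/2:ℝ)^n = 1/2^n := by rw [div_pow, one_pow]
  rw [hhalf] at hn
  set k0 : ℕ := ⌊t * 2^n⌋₊ with hk0
  rcases le_or_gt k0 (2^n - 1) with h | h
  · refine ⟨n, k0, lt_of_le_of_lt h (Nat.sub_lt h2npos one_pos), ?_⟩
    have hfl : (k0:ℝ) ≤ t * 2^n := Nat.floor_le (by positivity)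
    have hfu : t * 2^n < k0 + 1 := Nat.lt_floor_add_one _
    rw [abs_sub_lt_iff]
    constructor
    · have : (k0:ℝ)/2^n ≤ t := by rw [div_le_iff₀ h2n]; exact hfl
      linarith
    · have : t - (k0:ℝ)/2^n < 1/2^n := by
        rw [sub_lt_iff_lt_add, ← add_div, lt_div_iff₀ h2n]
        linarith
      linarith
  · have hk0ge : 2^n ≤ k0 := by omega
    have hfl : (k0:ℝ) ≤ t * 2^n := Nat.floor_le (by positivity)
    have ht1' : (1:ℝ) ≤ t := by
      have : (2^n:ℝ) ≤ t * 2^n := le_trans (by exact_mod_cast hk0ge) hfl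
      nlinarith
    have hteq : t = 1 := le_antisymm ht1 ht1'
    refine ⟨n, 2^n - 1, Nat.sub_lt h2npos one_pos, ?_⟩
    have hcast : ((2^n - 1 : ℕ):ℝ) = 2^n - 1 := by
      push_cast [Nat.cast_sub (Nat.one_le_iff_ne_zero.2 h2npos.ne')]
      norm_num
    rw [hcast, hteq]
    have : (2^n - 1:ℝ)/2^n - 1 = -(1/2^n) := by field_simp; ring
    rw [this, abs_neg, abs_of_pos (by positivity)]
    exact hn

lemma dyadic_chain (f : ℝ → ℝ) (h0 : f 0 = 0) (a : ℕ → ℝ) (ha : ∀ i, 0 < a i)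
    (n k : ℕ) (hk : k < 2^n)
    (H : ∀ i j : ℕ, j < 2^(i+1) → |f (((j:ℝ)+1)/2^(i+1)) - f ((j:ℝ)/2^(i+1))| ≤ a i) :
    |f ((k:ℝ)/2^n)| ≤ ∑ i ∈ Finset.range n, a i := by
  have key : ∀ m, m ≤ n → |f ((↑(k / 2^(n-m)) : ℝ)/2^m)| ≤ ∑ i ∈ Finset.range m, a i := by
    intro m
    induction m with
    | zero =>
      intro _
      have : k / 2^(n-0) = 0 := Nat.div_eq_of_lt (by simpa using hk)
      rw [this]
      simp [h0]
    | succ m ih =>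
      intro hmn
      have hmn' : m ≤ n := le_of_lt (Nat.lt_of_succ_le hmn)
      set K : ℕ := k / 2^(n-(m+1)) with hK
      have h2 : k / 2^(n-m) = K / 2 := by
        rw [hK, Nat.div_div_eq_div_mul, ← pow_succ]
        congr 2
        omega
      have hKlt : K < 2^(m+1) := by
        rw [hK]
        apply Nat.div_lt_of_lt_mul
        calc k < 2^n := hk
        _ = 2^(n-(m+1)) * 2^(m+1) := by rw [← pow_add]; congr 1; omega
      rcases Nat.even_or_odd K with ⟨c, hc⟩ | ⟨c, hc⟩
      · have hdiv : K / 2 = c := by omega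
        have harg : ((K:ℝ))/2^(m+1) = ((k / 2^(n-m) : ℕ):ℝ)/2^m := by
          rw [h2, hdiv, hc]
          push_cast
          rw [pow_succ]
          field_simp
          ring
        rw [harg]
        calc |f (((k / 2^(n-m) : ℕ):ℝ)/2^m)| ≤ ∑ i ∈ Finset.range m, a i := ih hmn'
        _ ≤ ∑ i ∈ Finset.range (m+1), a i := by
            rw [Finset.sum_range_succ]
            linarith [ha m]
      · have hdiv : K / 2 = c := by omega
        have h2c : 2*c < 2^(m+1) := by omega
        have harg2 : ((k / 2^(n-m) : ℕ):ℝ)/2^m = ((2*c:ℕ):ℝ)/2^(m+1) := by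
          rw [h2, hdiv]
          push_cast
          rw [pow_succ]
          field_simp
        have hstep := H m (2*c) h2c
        have hKr : ((K:ℝ))/2^(m+1) = (((2*c:ℕ):ℝ)+1)/2^(m+1) := by
          rw [hc]; push_cast; ring_nf
        calc |f ((↑K:ℝ)/2^(m+1))|
            ≤ |f ((↑K:ℝ)/2^(m+1)) - f (((k / 2^(n-m) : ℕ):ℝ)/2^m)|
              + |f (((k / 2^(n-m) : ℕ):ℝ)/2^m)| := by
              have h3 := abs_sub_abs_le_abs_sub (f ((↑K:ℝ)/2^(m+1))) (f (((k / 2^(n-m) : ℕ):ℝ)/2^m))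
              linarith
        _ ≤ a m + ∑ i ∈ Finset.range m, a i := by
              apply add_le_add _ (ih hmn')
              rw [harg2, hKr]
              exact hstep
        _ = ∑ i ∈ Finset.range (m+1), a i := by
              rw [Finset.sum_range_succ]; ring
  have := key n (le_refl n)
  simpa using this

lemma chain_exists (f : ℝ → ℝ) (hf : Continuous f) (h0 : f 0 = 0)
    (a : ℕ → ℝ) (ha : ∀ i, 0 < a i) (r : ℝ)
    (hsum : ∀ n : ℕ, ∑ i ∈ Finset.range n, a i ≤ r)
    {t : ℝ} (ht0 : 0 ≤ t) (ht1 : t ≤ 1) (hgt : r < |f t|) :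
    ∃ i j : ℕ, j < 2^(i+1) ∧
      a i < |f (((j:ℝ)+1)/2^(i+1)) - f ((j:ℝ)/2^(i+1))| := by
  by_contra hcon
  push_neg at hcon
  have hU : IsOpen {s : ℝ | r < |f s|} := isOpen_lt continuous_const (continuous_abs.comp hf)
  obtain ⟨δ, hδ, hball⟩ := Metric.isOpen_iff.1 hU t hgt
  obtain ⟨n, k, hk, hnear⟩ := dyadic_approx ht0 ht1 hδ
  have hmem : ((k:ℝ)/2^n) ∈ {s : ℝ | r < |f s|} := by
    apply hball
    rw [Metric.mem_ball, Real.dist_eq]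
    exact hnear
  have hchain := dyadic_chain f h0 a ha n k hk hcon
  have := hsum n
  simp only [Set.mem_setOf_eq] at hmem
  linarith

set_option maxHeartbeats 1200000 in
/-- chaining/Gaussian concentration for a continuous centered Gaussian
process `N` on `[0,1]` with `N(0) = 0` and increment variances bounded by
`C√(t-s)(|log(t-s)|+1)exp(-Δ²/2)`: there are constants `c, C' > 0` independent of `Δ`
and `r` such that `P(sup_{t≤1} |N(t)| > r) ≤ c·exp(-C'·r²·exp(Δ²/2))` for all `r > 0`. -/
theorem stmt_10 (C : ℝ) (hC : 0 < C) :
    ∃ c C' : ℝ, 0 < c ∧ 0 < C' ∧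
      ∀ (Ω : Type) (_ : MeasureSpace Ω), IsProbabilityMeasure (volume : Measure Ω) →
        ∀ (Δ : ℝ), 1 ≤ Δ →
          ∀ N : Ω → ℝ → ℝ,
            (∀ ω, Continuous (N ω)) →
            (∀ ω, N ω 0 = 0) →
            (∀ s, Measurable fun ω => N ω s) →
            (∀ s t : ℝ, 0 ≤ s → s < t → t ≤ 1 →
              ∃ v : ℝ≥0,
                (v : ℝ) ≤
                  C * Real.sqrt (t - s) * (|Real.log (t - s)| + 1) *
                    Real.exp (-(Δ ^ 2) / 2) ∧
                Measure.map (fun ω => N ω t - N ω s) (volume : Measure Ω) =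
                  gaussianReal 0 v) →
            ∀ r : ℝ, 0 < r →
              (volume : Measure Ω) {ω | ∃ t ∈ Set.Icc (0 : ℝ) 1, r < |N ω t|} ≤
                ENNReal.ofReal (c * Real.exp (-C' * r ^ 2 * Real.exp (Δ ^ 2 / 2))) := by
  have h14 : (1.4:ℝ) < Real.sqrt 2 := by
    nlinarith [Real.sq_sqrt (by norm_num : (0:ℝ) ≤ 2), Real.sqrt_nonneg 2]
  have h15 : Real.sqrt 2 < 1.5 := by
    nlinarith [Real.sq_sqrt (by norm_num : (0:ℝ) ≤ 2), Real.sqrt_nonneg 2]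
  set q : ℝ := 81 * Real.sqrt 2 / 100 with hqdef
  have hq1 : 1 < q := by rw [hqdef]; nlinarith
  have hq2 : q ≤ 2 := by rw [hqdef]; nlinarith
  have hqs : q ≤ Real.sqrt 2 := by rw [hqdef]; nlinarith
  have hq0 : (0:ℝ) < q := lt_trans one_pos hq1
  set L : ℝ := Real.log q with hLdef
  have hL0 : 0 < L := Real.log_pos hq1
  have hL1 : L < 1 := by
    have h1 : L ≤ Real.log 2 := Real.log_le_log hq0 hq2
    have h2 := Real.log_two_lt_d9
    linarith
  set β : ℝ := L^2/(1600*C) with hβdef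
  have hβ : 0 < β := by positivity
  refine ⟨4, β/2, by norm_num, by positivity, ?_⟩
  intro Ω mΩ hprob Δ hΔ N hcont h0 hmeas hvar r hr
  haveI := hprob
  set E : ℝ := Real.exp (Δ^2/2) with hEdef
  have hE : 0 < E := Real.exp_pos _
  set x : ℝ := r^2 * E with hxdef
  have hx0 : 0 < x := by positivity
  set a : ℕ → ℝ := fun i => r/10 * (9/10)^i with hadef
  have hapos : ∀ i, 0 < a i := fun i => by rw [hadef]; positivity
  set σ2 : ℕ → ℝ := fun i => C * ((Real.sqrt 2)^(i+1))⁻¹ * ((i:ℝ)+2) * E⁻¹ with hσdef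
  have hσpos : ∀ i, 0 < σ2 i := fun i => by
    rw [hσdef]
    have : (0:ℝ) < Real.sqrt 2 := by linarith
    positivity
  -- partial sums of a are at most r
  have hsum : ∀ n : ℕ, ∑ i ∈ Finset.range n, a i ≤ r := by
    intro n
    have hs : ∑ i ∈ Finset.range n, ((9:ℝ)/10)^i ≤ 10 := by
      have h1 : ∑ i ∈ Finset.range n, ((9:ℝ)/10)^i ≤ ∑' i : ℕ, ((9:ℝ)/10)^i :=
        Summable.sum_le_tsum (Finset.range n) (fun i _ => by positivity)
          (summable_geometric_of_lt_one (by norm_num) (by norm_num))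
      rw [tsum_geometric_of_lt_one (by norm_num) (by norm_num)] at h1
      norm_num at h1
      linarith
    calc ∑ i ∈ Finset.range n, a i = r/10 * ∑ i ∈ Finset.range n, ((9:ℝ)/10)^i := by
          rw [hadef, ← Finset.mul_sum]
      _ ≤ r/10 * 10 := by
          apply mul_le_mul_of_nonneg_left hs (by positivity)
      _ = r := by ring
  -- key analytic inequality per level
  have hkey : ∀ i : ℕ, β*((i:ℝ)+2)*x ≤ (a i)^2/(4*σ2 i) := by
    intro i
    have hS : (0:ℝ) < (Real.sqrt 2)^(i+1) := by positivity
    set S : ℝ := (Real.sqrt 2)^(i+1) with hSdef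
    set P : ℝ := ((81:ℝ)/100)^i with hPdef
    have hPpos : 0 < P := by rw [hPdef]; positivity
    have hqf : q = (81/100)*Real.sqrt 2 := by rw [hqdef]; ring
    have hqi : q^(i+1) ≤ P * S := by
      have e1 : q^(i+1) = P * ((Real.sqrt 2)^i) * q := by
        rw [pow_succ, hqf, mul_pow, hPdef]
      have e2 : S = (Real.sqrt 2)^i * Real.sqrt 2 := by rw [hSdef, pow_succ]
      rw [e1, e2]
      calc P * (Real.sqrt 2)^i * q ≤ P * (Real.sqrt 2)^i * Real.sqrt 2 :=
          mul_le_mul_of_nonneg_left hqs (by positivity)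
      _ = P * ((Real.sqrt 2)^i * Real.sqrt 2) := by ring
    have hg := geom_growth hq1 hL1 (i+1)
    rw [← hLdef] at hg
    push_cast at hg
    have h1 : ((i:ℝ)+2)^2*L^2/4 ≤ P * S := by
      have : (((i:ℝ)+1+1)*L/2)^2 = ((i:ℝ)+2)^2*L^2/4 := by ring
      rw [this] at hg
      linarith
    have h2 : L^2*((i:ℝ)+2)^2/S ≤ 4*P := by
      rw [div_le_iff₀ hS]
      nlinarith
    have ea : (a i)^2 = r^2/100 * P := by
      have e9 : (((9:ℝ)/10)^i)^2 = P := by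
        rw [← pow_mul, mul_comm i 2, pow_mul, hPdef]
        norm_num
      calc (a i)^2 = (r/10)^2 * (((9:ℝ)/10)^i)^2 := by rw [hadef]; ring
      _ = r^2/100 * P := by rw [e9]; ring
    rw [le_div_iff₀ (by positivity : (0:ℝ) < 4*σ2 i)]
    have eL : β*((i:ℝ)+2)*x*(4*σ2 i) = (L^2*((i:ℝ)+2)^2/S)*(r^2/400) := by
      rw [hβdef, hσdef, hxdef, hSdef]
      field_simp
      ring
    rw [eL, ea]
    calc (L^2*((i:ℝ)+2)^2/S)*(r^2/400) ≤ (4*P)*(r^2/400) :=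
        mul_le_mul_of_nonneg_right h2 (by positivity)
    _ = r^2/100*P := by ring
  -- the bad-increment events
  set A : ℕ → ℕ → Set Ω := fun i j =>
    {ω | a i < |N ω (((j:ℝ)+1)/2^(i+1)) - N ω ((j:ℝ)/2^(i+1))|} with hA
  have hincl : {ω | ∃ t ∈ Set.Icc (0:ℝ) 1, r < |N ω t|} ⊆
      ⋃ i : ℕ, ⋃ j : Fin (2^(i+1)), A i (j:ℕ) := by
    rintro ω ⟨t, ⟨ht0, ht1⟩, hgt⟩
    obtain ⟨i, j, hj, hineq⟩ := chain_exists (N ω) (hcont ω) (h0 ω) a hapos r hsum ht0 ht1 hgt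
    exact Set.mem_iUnion.2 ⟨i, Set.mem_iUnion.2 ⟨⟨j, hj⟩, hineq⟩⟩
  -- measure of each bad event
  have hAbound : ∀ i j : ℕ, j < 2^(i+1) →
      volume (A i j) ≤ ENNReal.ofReal (2 * Real.exp (-((a i)^2) / (4*σ2 i))) := by
    intro i j hj
    set s_ : ℝ := (j:ℝ)/2^(i+1) with hs_def
    set t_ : ℝ := ((j:ℝ)+1)/2^(i+1) with ht_def
    have h2p : (0:ℝ) < 2^(i+1) := by positivity
    have hs0 : 0 ≤ s_ := by rw [hs_def]; positivity
    have hst : s_ < t_ := by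
      rw [hs_def, ht_def, div_lt_div_iff_of_pos_right h2p]
      linarith
    have hj1 : ((j:ℝ)+1) ≤ 2^(i+1) := by
      have : (j+1 : ℕ) ≤ 2^(i+1) := hj
      exact_mod_cast this
    have ht1' : t_ ≤ 1 := by
      rw [ht_def, div_le_one h2p]
      exact hj1
    obtain ⟨v, hvle, hlaw⟩ := hvar s_ t_ hs0 hst ht1'
    have hts : t_ - s_ = ((2:ℝ)^(i+1))⁻¹ := by
      rw [hs_def, ht_def, div_sub_div_same]
      norm_num
    rw [hts] at hvle
    have hsqr : Real.sqrt (((2:ℝ)^(i+1))⁻¹) = ((Real.sqrt 2)^(i+1))⁻¹ := by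
      rw [Real.sqrt_inv, sqrt_two_pow]
    have habs : |Real.log (((2:ℝ)^(i+1))⁻¹)| = ((i:ℝ)+1) * Real.log 2 := by
      rw [Real.log_inv, Real.log_pow, abs_neg, abs_of_nonneg (by positivity)]
      push_cast
      ring
    have hexp : Real.exp (-(Δ^2)/2) = E⁻¹ := by
      rw [neg_div, Real.exp_neg, hEdef]
    have hvσ : (v:ℝ) ≤ σ2 i := by
      refine hvle.trans ?_
      rw [hsqr, habs, hexp, hσdef]
      have hlog2 : ((i:ℝ)+1)*Real.log 2 + 1 ≤ (i:ℝ)+2 := by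
        have hl2 := Real.log_two_lt_d9
        have hi1 : (0:ℝ) ≤ (i:ℝ)+1 := by positivity
        have := mul_le_mul_of_nonneg_left (show Real.log 2 ≤ 1 by linarith) hi1
        linarith
      have hsp : (0:ℝ) < ((Real.sqrt 2)^(i+1))⁻¹ := by positivity
      calc C * ((Real.sqrt 2)^(i+1))⁻¹ * (((i:ℝ)+1)*Real.log 2 + 1) * E⁻¹
          ≤ C * ((Real.sqrt 2)^(i+1))⁻¹ * (((i:ℝ))+2) * E⁻¹ := by
            apply mul_le_mul_of_nonneg_right _ (by positivity)
            apply mul_le_mul_of_nonneg_left hlog2 (by positivity)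
      _ = C * ((Real.sqrt 2)^(i+1))⁻¹ * (((i:ℕ):ℝ)+2) * E⁻¹ := by norm_num
    have hX : Measurable fun ω => N ω t_ - N ω s_ := (hmeas t_).sub (hmeas s_)
    have hsmeas : MeasurableSet {y : ℝ | a i < |y|} :=
      measurableSet_lt measurable_const continuous_abs.measurable
    have hAeq : volume (A i j) =
        Measure.map (fun ω => N ω t_ - N ω s_) volume {y : ℝ | a i < |y|} := by
      rw [Measure.map_apply hX hsmeas]
      rfl
    rw [hAeq, hlaw]
    exact gauss_tail v (σ2 i) (a i) (hσpos i) hvσ (hapos i)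
  -- per-level sums
  have hlevel : ∀ i : ℕ, (∑' j : Fin (2^(i+1)), volume (A i (j:ℕ))) ≤
      (2:ℝ≥0∞)^(i+1) * ENNReal.ofReal (2 * Real.exp (-((a i)^2) / (4*σ2 i))) := by
    intro i
    calc (∑' j : Fin (2^(i+1)), volume (A i (j:ℕ)))
        ≤ ∑' _j : Fin (2^(i+1)), ENNReal.ofReal (2 * Real.exp (-((a i)^2) / (4*σ2 i))) :=
          ENNReal.tsum_le_tsum (fun j => hAbound i j j.2)
      _ = (2^(i+1) : ℕ) * ENNReal.ofReal (2 * Real.exp (-((a i)^2) / (4*σ2 i))) := by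
          rw [tsum_fintype]
          simp [Finset.sum_const, Finset.card_univ]
      _ = (2:ℝ≥0∞)^(i+1) * ENNReal.ofReal (2 * Real.exp (-((a i)^2) / (4*σ2 i))) := by
          push_cast
          ring_nf
  have e4 : rexp (2*Real.log 2) = 4 := by
    rw [two_mul, Real.exp_add, Real.exp_log two_pos]; norm_num
  have hargeq : -(β/2) * r^2 * Real.exp (Δ^2/2) = -((β/2)*x) := by
    rw [hxdef, hEdef]; ring
  by_cases hxcase : x < 4*Real.log 2/β
  · -- small x : trivial bound by 1
    have hCx : (β/2)*x ≤ 2*Real.log 2 := by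
      rw [lt_div_iff₀ hβ] at hxcase
      nlinarith
    have hlow : (1:ℝ) ≤ 4 * Real.exp (-(β/2) * r^2 * Real.exp (Δ^2/2)) := by
      rw [hargeq]
      have h1 : rexp (-(2*Real.log 2)) ≤ rexp (-((β/2)*x)) := by
        apply Real.exp_le_exp.2; linarith
      rw [Real.exp_neg, e4] at h1
      nlinarith [Real.exp_pos (-((β/2)*x))]
    calc volume {ω | ∃ t ∈ Set.Icc (0:ℝ) 1, r < |N ω t|} ≤ 1 := prob_le_one
    _ ≤ ENNReal.ofReal (4 * Real.exp (-(β/2) * r^2 * Real.exp (Δ^2/2))) := by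
        rw [show (1:ℝ≥0∞) = ENNReal.ofReal 1 by simp]
        exact ENNReal.ofReal_le_ofReal hlow
  · -- large x : chaining bound
    have hx₀ : 4*Real.log 2/β ≤ x := not_lt.1 hxcase
    have hβx : 4*Real.log 2 ≤ β*x := by
      rw [div_le_iff₀ hβ] at hx₀
      nlinarith
    have hterm : ∀ i : ℕ,
        (2:ℝ≥0∞)^(i+1) * ENNReal.ofReal (2 * Real.exp (-((a i)^2) / (4*σ2 i))) ≤
        (2⁻¹:ℝ≥0∞)^i * ENNReal.ofReal (Real.exp (-((β/2)*x))) := by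
      intro i
      have hen : (2:ℝ≥0∞)^(i+1) = ENNReal.ofReal ((2:ℝ)^(i+1)) := by
        rw [ENNReal.ofReal_pow (by norm_num : (0:ℝ) ≤ 2)]
        norm_num
      have heninv : (2⁻¹:ℝ≥0∞)^i = ENNReal.ofReal (((1:ℝ)/2)^i) := by
        rw [ENNReal.ofReal_pow (by norm_num : (0:ℝ) ≤ 1/2)]
        congr 1
        rw [one_div, ENNReal.ofReal_inv_of_pos two_pos, ENNReal.ofReal_ofNat]
      rw [hen, heninv, ← ENNReal.ofReal_mul (by positivity), ← ENNReal.ofReal_mul (by positivity)]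
      apply ENNReal.ofReal_le_ofReal
      have hpow2 : ∀ k:ℕ, ((2:ℝ))^k = rexp (k*Real.log 2) := fun k => by
        rw [Real.exp_nat_mul, Real.exp_log two_pos]
      have hhalfpow : ((1:ℝ)/2)^i = rexp (-((i:ℝ)*Real.log 2)) := by
        rw [Real.exp_neg, ← hpow2, div_pow, one_pow, one_div]
      have hbig : (a i)^2/(4*σ2 i) ≥ ((i:ℝ)+2)*Real.log 2 + ((i:ℝ)*Real.log 2 + (β/2)*x) := by
        have hk := hkey i
        have hi0 : (0:ℝ) ≤ (i:ℝ) := by positivity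
        have hmul : (i:ℝ)*(4*Real.log 2) ≤ (i:ℝ)*(β*x) :=
          mul_le_mul_of_nonneg_left hβx hi0
        have hl2 : (0:ℝ) < Real.log 2 := Real.log_pos one_lt_two
        have hexp2 : β*((i:ℝ)+2)*x = (i:ℝ)*(β*x) + 2*(β*x) := by ring
        have hmul2 : (0:ℝ) ≤ (i:ℝ)*Real.log 2 := mul_nonneg hi0 hl2.le
        linarith
      calc (2:ℝ)^(i+1) * (2 * rexp (-((a i)^2) / (4*σ2 i)))
          = rexp (((i:ℝ)+1)*Real.log 2) * 2 * rexp (-((a i)^2) / (4*σ2 i)) := by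
            rw [hpow2 (i+1)]
            push_cast
            ring
        _ = rexp (((i:ℝ)+1)*Real.log 2 + Real.log 2 + (-((a i)^2) / (4*σ2 i))) := by
            rw [Real.exp_add, Real.exp_add, Real.exp_log two_pos]
        _ ≤ rexp (-((i:ℝ)*Real.log 2) + -((β/2)*x)) := by
            apply Real.exp_le_exp.2
            rw [neg_div]
            linarith
        _ = ((1:ℝ)/2)^i * rexp (-((β/2)*x)) := by
            rw [Real.exp_add, hhalfpow]
    calc volume {ω | ∃ t ∈ Set.Icc (0:ℝ) 1, r < |N ω t|}
        ≤ volume (⋃ i : ℕ, ⋃ j : Fin (2^(i+1)), A i (j:ℕ)) := measure_mono hincl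
      _ ≤ ∑' i : ℕ, volume (⋃ j : Fin (2^(i+1)), A i (j:ℕ)) := measure_iUnion_le _
      _ ≤ ∑' i : ℕ, ∑' j : Fin (2^(i+1)), volume (A i (j:ℕ)) :=
          ENNReal.tsum_le_tsum (fun i => measure_iUnion_le _)
      _ ≤ ∑' i : ℕ, (2:ℝ≥0∞)^(i+1) * ENNReal.ofReal (2 * Real.exp (-((a i)^2) / (4*σ2 i))) :=
          ENNReal.tsum_le_tsum hlevel
      _ ≤ ∑' i : ℕ, (2⁻¹:ℝ≥0∞)^i * ENNReal.ofReal (Real.exp (-((β/2)*x))) :=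
          ENNReal.tsum_le_tsum hterm
      _ = (∑' i : ℕ, (2⁻¹:ℝ≥0∞)^i) * ENNReal.ofReal (Real.exp (-((β/2)*x))) :=
          ENNReal.tsum_mul_right
      _ = 2 * ENNReal.ofReal (Real.exp (-((β/2)*x))) := by
          rw [ENNReal.tsum_geometric, ENNReal.one_sub_inv_two, inv_inv]
      _ ≤ ENNReal.ofReal (4 * Real.exp (-(β/2) * r^2 * Real.exp (Δ^2/2))) := by
          rw [hargeq, show (2:ℝ≥0∞) = ENNReal.ofReal 2 by norm_num,
            ← ENNReal.ofReal_mul (by norm_num)]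
          apply ENNReal.ofReal_le_ofReal
          nlinarith [Real.exp_pos (-((β/2)*x))]
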